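/- arXiv:2603.04332 — 8 statements merged into one kernel-verified Lean document; each statement's English description precedes it below -/
import Mathlib

section
/- The supremum over density operators ρ of |⟨A→B⟩_ρ^op| is at most the supremum over density operators ρ of |tr[ρ (α AB + (1−α) BA)]|, for any real α. -/
open Matrix Complex
open scoped ComplexOrder

private lemma single_conj_dot {m : Type*} [Fintype m] [DecidableEq m]
    (ρ : Matrix m m ℂ) (k l : m) :
    star (Pi.single k 1 : m → ℂ) ⬝ᵥ ρ *ᵥ (Pi.single l 1) = ρ k l := by
  simp [mulVec_single, dotProduct, Pi.single_apply, apply_ite]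

private lemma entry_abs_le_one {m : Type*} [Fintype m] [DecidableEq m]
    {ρ : Matrix m m ℂ} (hρ : ρ.PosSemidef) (htr : ρ.trace = 1) (k l : m) :
    ‖ρ k l‖ ≤ 1 := by
  have hd : ∀ i, 0 ≤ ρ i i := by
    intro i
    have := hρ.dotProduct_mulVec_nonneg (Pi.single i 1)
    rwa [single_conj_dot] at this
  have hdle : ∀ i, (ρ i i).re ≤ 1 := by
    intro i
    have h := Finset.single_le_sum (f := fun i => ρ i i) (fun j _ => hd j)
      (Finset.mem_univ i)
    rw [show ∑ j, ρ j j = ρ.trace from rfl, htr] at h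
    exact (Complex.le_def.mp h).1
  have hdre : ∀ i, 0 ≤ (ρ i i).re := fun i => (Complex.le_def.mp (hd i)).1
  have hdim : ∀ i, (ρ i i).im = 0 := fun i => ((Complex.le_def.mp (hd i)).2).symm
  by_cases hkl : k = l
  · subst hkl
    rw [Complex.norm_def, Complex.normSq_apply, hdim k]
    rw [show (ρ k k).re * (ρ k k).re + 0 * 0 = (ρ k k).re ^ 2 by ring]
    rw [Real.sqrt_sq (hdre k)]
    exact hdle k
  · set c := ρ k l with hc
    have hherm : ρ l k = (starRingEnd ℂ) c := by
      have := hρ.1.apply k l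
      rw [hc, ← this]
      simp
    have h0 := hρ.dotProduct_mulVec_nonneg ((Pi.single k 1 : m → ℂ) + (-(starRingEnd ℂ) c) • (Pi.single l 1 : m → ℂ))
    simp only [star_add, star_smul, mulVec_add, mulVec_smul, dotProduct_add, add_dotProduct,
      dotProduct_smul, smul_dotProduct, single_conj_dot, smul_eq_mul, star_neg,
      RCLike.star_def, starRingEnd_self_apply, hherm] at h0
    have h1 : 0 ≤ ρ k k - 2 * (Complex.normSq c : ℂ) + (Complex.normSq c : ℂ) * ρ l l := by
      have e : ρ k k + -c * (starRingEnd ℂ) c + -(starRingEnd ℂ) c * (ρ k l + -c * ρ l l)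
          = ρ k k - 2 * (Complex.normSq c : ℂ) + (Complex.normSq c : ℂ) * ρ l l := by
        rw [← hc, ← Complex.mul_conj]
        ring
      rwa [e] at h0
    have h2 := (Complex.le_def.mp h1).1
    simp only [Complex.add_re, Complex.sub_re, Complex.mul_re, Complex.ofReal_re,
      Complex.ofReal_im, hdim l, Complex.re_ofNat, Complex.im_ofNat, Complex.zero_re,
      Complex.zero_im, mul_zero, zero_mul, sub_zero, zero_sub] at h2
    have hn : 0 ≤ Complex.normSq c := Complex.normSq_nonneg c
    have hle : Complex.normSq c ≤ 1 := by nlinarith [hdle k, hdle l]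
    rw [Complex.norm_def]
    exact Real.sqrt_le_one.mpr hle

private lemma trace_abs_le {m : Type*} [Fintype m] [DecidableEq m]
    {ρ : Matrix m m ℂ} (hρ : ρ.PosSemidef) (htr : ρ.trace = 1) (M : Matrix m m ℂ) :
    ‖(ρ * M).trace‖ ≤ ∑ k, ∑ l, ‖M l k‖ := by
  rw [show (ρ * M).trace = ∑ k, ∑ l, ρ k l * M l k by
    simp [Matrix.trace, Matrix.mul_apply, Matrix.diag]]
  calc ‖∑ k, ∑ l, ρ k l * M l k‖
      ≤ ∑ k, ‖∑ l, ρ k l * M l k‖ := norm_sum_le _ _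
    _ ≤ ∑ k, ∑ l, ‖ρ k l * M l k‖ :=
        Finset.sum_le_sum fun k _ => norm_sum_le _ _
    _ ≤ ∑ k, ∑ l, ‖M l k‖ := by
        refine Finset.sum_le_sum fun k _ => Finset.sum_le_sum fun l _ => ?_
        rw [norm_mul]
        calc ‖ρ k l‖ * ‖M l k‖
            ≤ 1 * ‖M l k‖ :=
              mul_le_mul_of_nonneg_right (entry_abs_le_one hρ htr k l)
                (norm_nonneg _)
          _ = ‖M l k‖ := one_mul _

/-- The supremum over states of the absolute operational correlation is at most the supremum
over states of the absolute algebraic correlation `tr[ρ (α AB + (1−α) BA)]`. -/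
theorem sup_operational_le_sup_algebraic
    {m ι κ : Type*} [Fintype m] [DecidableEq m] [Fintype ι] [Fintype κ]
    (A B : Matrix m m ℂ) (α : ℝ)
    (a : ι → ℝ) (P : ι → Matrix m m ℂ)
    (b : κ → ℝ) (Q : κ → Matrix m m ℂ)
    (hP_herm : ∀ i, (P i).IsHermitian) (hP_idem : ∀ i, P i * P i = P i)
    (hP_orth : ∀ i j, i ≠ j → P i * P j = 0) (hP_sum : ∑ i, P i = 1)
    (hA : A = ∑ i, (a i : ℂ) • P i)
    (hQ_herm : ∀ j, (Q j).IsHermitian) (hQ_idem : ∀ j, Q j * Q j = Q j)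
    (hQ_orth : ∀ j k, j ≠ k → Q j * Q k = 0) (hQ_sum : ∑ j, Q j = 1)
    (hB : B = ∑ j, (b j : ℂ) • Q j) :
    sSup {x : ℝ | ∃ ρ : Matrix m m ℂ, ρ.PosSemidef ∧ ρ.trace = 1 ∧
        x = ‖∑ i, ∑ j, ((a i : ℂ) * (b j : ℂ)) * (P i * ρ * P i * Q j).trace‖}
      ≤
    sSup {x : ℝ | ∃ ρ : Matrix m m ℂ, ρ.PosSemidef ∧ ρ.trace = 1 ∧
        x = ‖(ρ * ((α : ℂ) • (A * B) + ((1 - α : ℝ) : ℂ) • (B * A))).trace‖} := by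
  set M : Matrix m m ℂ := (α : ℂ) • (A * B) + ((1 - α : ℝ) : ℂ) • (B * A) with hM
  by_cases hm : Nonempty m
  · apply csSup_le_csSup
    · -- bounded above
      refine ⟨∑ k, ∑ l, ‖M l k‖, ?_⟩
      rintro x ⟨ρ, hρ, htr, rfl⟩
      exact trace_abs_le hρ htr M
    · -- nonempty
      obtain ⟨k₀⟩ := hm
      refine ⟨_, Matrix.diagonal (Pi.single k₀ (1 : ℂ)), ?_, ?_, rfl⟩
      · refine Matrix.posSemidef_diagonal_iff.mpr fun i => ?_
        by_cases h : i = k₀ <;> simp [h, Pi.single_apply]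
      · rw [Matrix.trace_diagonal]
        simp [Pi.single_apply]
    · -- subset
      rintro x ⟨ρ, hρ, htr, rfl⟩
      have hPA : ∀ i, P i * A = (a i : ℂ) • P i := by
        intro i
        rw [hA, Matrix.mul_sum, Finset.sum_eq_single i]
        · rw [Matrix.mul_smul, hP_idem]
        · intro j _ hj
          rw [Matrix.mul_smul, hP_orth i j (Ne.symm hj), smul_zero]
        · intro h
          exact absurd (Finset.mem_univ i) h
      have hAP : ∀ i, A * P i = (a i : ℂ) • P i := by
        intro i
        rw [hA, Matrix.sum_mul, Finset.sum_eq_single i]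
        · rw [Matrix.smul_mul, hP_idem]
        · intro j _ hj
          rw [Matrix.smul_mul, hP_orth j i hj, smul_zero]
        · intro h
          exact absurd (Finset.mem_univ i) h
      have hXA : ∀ i, (P i * ρ * P i) * A = (a i : ℂ) • (P i * ρ * P i) := by
        intro i
        rw [mul_assoc, hPA i, Matrix.mul_smul]
      have hAX : ∀ i, A * (P i * ρ * P i) = (a i : ℂ) • (P i * ρ * P i) := by
        intro i
        rw [← mul_assoc, ← mul_assoc, hAP i, Matrix.smul_mul, Matrix.smul_mul]
      have hXB : ∀ i, ((P i * ρ * P i) * B).trace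
          = ∑ j, (b j : ℂ) * (P i * ρ * P i * Q j).trace := by
        intro i
        rw [hB, Matrix.mul_sum, Matrix.trace_sum]
        refine Finset.sum_congr rfl fun j _ => ?_
        rw [Matrix.mul_smul, Matrix.trace_smul, smul_eq_mul]
      -- the dephased state
      refine ⟨∑ i, P i * ρ * P i, ?_, ?_, ?_⟩
      · refine Finset.sum_induction _ (fun N : Matrix m m ℂ => N.PosSemidef)
          (fun x y hx hy => hx.add hy) Matrix.PosSemidef.zero (fun i _ => ?_)
        have h := hρ.conjTranspose_mul_mul_same (P i)
        rwa [(hP_herm i).eq] at h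
      · rw [Matrix.trace_sum]
        calc ∑ i, (P i * ρ * P i).trace
            = ∑ i, (P i * ρ).trace := by
              refine Finset.sum_congr rfl fun i _ => ?_
              rw [Matrix.trace_mul_cycle, hP_idem i]
          _ = ((∑ i, P i) * ρ).trace := by rw [Matrix.sum_mul, Matrix.trace_sum]
          _ = 1 := by rw [hP_sum, one_mul, htr]
      · have h1 : ∀ i : ι, ((P i * ρ * P i) * (A * B)).trace
            = (a i : ℂ) * ∑ j, (b j : ℂ) * (P i * ρ * P i * Q j).trace := by
          intro i
          rw [← mul_assoc, hXA i, Matrix.smul_mul, Matrix.trace_smul, smul_eq_mul, hXB i]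
        have h2 : ∀ i : ι, ((P i * ρ * P i) * (B * A)).trace
            = (a i : ℂ) * ∑ j, (b j : ℂ) * (P i * ρ * P i * Q j).trace := by
          intro i
          rw [← mul_assoc, Matrix.trace_mul_comm, ← mul_assoc, hAX i, Matrix.smul_mul,
            Matrix.trace_smul, smul_eq_mul, hXB i]
        have hsum : ∑ i, (a i : ℂ) * ∑ j, (b j : ℂ) * (P i * ρ * P i * Q j).trace
            = ∑ i, ∑ j, ((a i : ℂ) * (b j : ℂ)) * (P i * ρ * P i * Q j).trace := by
          refine Finset.sum_congr rfl fun i _ => ?_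
          rw [Finset.mul_sum]
          exact Finset.sum_congr rfl fun j _ => (mul_assoc _ _ _).symm
        have key : ((∑ i, P i * ρ * P i) * M).trace
            = ∑ i, ∑ j, ((a i : ℂ) * (b j : ℂ)) * (P i * ρ * P i * Q j).trace := by
          rw [hM, Matrix.mul_add, Matrix.mul_smul, Matrix.mul_smul, Matrix.trace_add,
            Matrix.trace_smul, Matrix.trace_smul, Matrix.sum_mul, Matrix.sum_mul,
            Matrix.trace_sum, Matrix.trace_sum, smul_eq_mul, smul_eq_mul,
            Finset.sum_congr rfl (fun i _ => h1 i), Finset.sum_congr rfl (fun i _ => h2 i),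
            hsum, ← add_mul]
          rw [show ((α : ℂ) + ((1 - α : ℝ) : ℂ)) = 1 by push_cast; ring, one_mul]
        rw [key]
  · have h1 : {x : ℝ | ∃ ρ : Matrix m m ℂ, ρ.PosSemidef ∧ ρ.trace = 1 ∧
        x = ‖∑ i, ∑ j, ((a i : ℂ) * (b j : ℂ)) * (P i * ρ * P i * Q j).trace‖} = ∅ := by
      ext x
      simp only [Set.mem_setOf_eq, Set.mem_empty_iff_false, iff_false, not_exists]
      rintro ρ ⟨_, htr, _⟩
      have hie : IsEmpty m := not_nonempty_iff.mp hm
      rw [Matrix.trace, Finset.univ_eq_empty, Finset.sum_empty] at htr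
      exact zero_ne_one htr
    have h2 : {x : ℝ | ∃ ρ : Matrix m m ℂ, ρ.PosSemidef ∧ ρ.trace = 1 ∧
        x = ‖(ρ * M).trace‖} = ∅ := by
      ext x
      simp only [Set.mem_setOf_eq, Set.mem_empty_iff_false, iff_false, not_exists]
      rintro ρ ⟨_, htr, _⟩
      have hie : IsEmpty m := not_nonempty_iff.mp hm
      rw [Matrix.trace, Finset.univ_eq_empty, Finset.sum_empty] at htr
      exact zero_ne_one htr
    rw [h1, h2, Real.sSup_empty]
end

section
/- The difference between the two orderings of operational correlations is bounded by the sum of invasivenesses: |⟨A→B⟩_ρ^op − ⟨B→A⟩_ρ^op| ≤ ‖A∘_α B‖ · (‖Λ_A(ρ) − ρ‖₁ + ‖Λ_B(ρ) − ρ‖₁) for any α ∈ ℝ. -/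
open Matrix Complex
open scoped ComplexOrder

noncomputable def opNorm {m : Type*} [Fintype m] [DecidableEq m] (X : Matrix m m ℂ) : ℝ :=
  ‖Matrix.toEuclideanCLM (𝕜 := ℂ) X‖

noncomputable def trNorm {m : Type*} [Fintype m] [DecidableEq m] (X : Matrix m m ℂ) : ℝ :=
  (((Matrix.posSemidef_conjTranspose_mul_self X).1.eigenvectorUnitary.1 *
    diagonal (((↑) : ℝ → ℂ) ∘ (√·) ∘ (Matrix.posSemidef_conjTranspose_mul_self X).1.eigenvalues) *
    (star (Matrix.posSemidef_conjTranspose_mul_self X).1.eigenvectorUnitary : Matrix m m ℂ)).trace).re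

section
open scoped MatrixOrder

lemma trNorm_hermitian {m : Type*} [Fintype m] [DecidableEq m] {X : Matrix m m ℂ}
    (hX : X.IsHermitian) : trNorm X = ∑ i, |hX.eigenvalues i| := by
  set U : Matrix m m ℂ := (hX.eigenvectorUnitary : Matrix m m ℂ) with hU
  have hUstar : (star U) * U = 1 := Matrix.mem_unitaryGroup_iff'.mp hX.eigenvectorUnitary.2
  set D : Matrix m m ℂ := Matrix.diagonal (fun i => ((|hX.eigenvalues i| : ℝ) : ℂ))
  set Y : Matrix m m ℂ := U * D * (star U)
  have hDpos : D.PosSemidef := Matrix.posSemidef_diagonal_iff.mpr fun i => by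
    exact Complex.zero_le_real.mpr (abs_nonneg _)
  have hY : Y.PosSemidef := by
    exact hDpos.mul_mul_conjTranspose_same U
  have hYsq : Y ^ 2 = Xᴴ * X := by
    have hXX : Xᴴ * X = U * (Matrix.diagonal (RCLike.ofReal ∘ hX.eigenvalues) *
        Matrix.diagonal (RCLike.ofReal ∘ hX.eigenvalues)) * star U := by
      conv_lhs => rw [hX.eq, hX.spectral_theorem]
      simp only [Unitary.conjStarAlgAut_apply, ← hU]
      simp only [Matrix.mul_assoc]
      rw [← Matrix.mul_assoc (star U) U, hUstar, Matrix.one_mul]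
    rw [hXX]
    have hDD : D * D = Matrix.diagonal (RCLike.ofReal ∘ hX.eigenvalues) *
        Matrix.diagonal (RCLike.ofReal ∘ hX.eigenvalues) := by
      simp only [D, Matrix.diagonal_mul_diagonal]
      congr 1
      funext i
      simp only [Function.comp_apply]
      norm_cast
      simp only [abs_mul_abs_self]
      rfl
    rw [← hDD, pow_two]
    simp only [Y, Matrix.mul_assoc]
    rw [← Matrix.mul_assoc (star U) U, hUstar, Matrix.one_mul]
  have hH := Matrix.posSemidef_conjTranspose_mul_self X
  set V : Matrix m m ℂ := (hH.1.eigenvectorUnitary : Matrix m m ℂ) with hV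
  have hVstar : (star V) * V = 1 := Matrix.mem_unitaryGroup_iff'.mp hH.1.eigenvectorUnitary.2
  set E : Matrix m m ℂ := diagonal (((↑) : ℝ → ℂ) ∘ (√·) ∘ hH.1.eigenvalues)
  set Z : Matrix m m ℂ := V * E * star V
  have hEpos : E.PosSemidef := Matrix.posSemidef_diagonal_iff.mpr fun i => by
    exact Complex.zero_le_real.mpr (Real.sqrt_nonneg _)
  have hZ : Z.PosSemidef := hEpos.mul_mul_conjTranspose_same V
  have hZsq : Z * Z = Xᴴ * X := by
    conv_rhs => rw [hH.1.spectral_theorem]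
    simp only [Unitary.conjStarAlgAut_apply, ← hV]
    simp only [Z, Matrix.mul_assoc]
    rw [← Matrix.mul_assoc (star V) V, hVstar, Matrix.one_mul, ← Matrix.mul_assoc E E,
      diagonal_mul_diagonal]
    congr 3
    funext i
    simp only [Function.comp_apply, RCLike.ofReal_real_eq_id, id]
    rw [← Complex.ofReal_mul, Real.mul_self_sqrt (hH.eigenvalues_nonneg i)]
    rfl
  have hYsq' : Y * Y = Xᴴ * X := by rw [← sq]; exact hYsq
  have hsqrt : Y = Z :=
    (CFC.sqrt_unique hYsq' hY.nonneg).symm.trans (CFC.sqrt_unique hZsq hZ.nonneg)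
  have hZtr : trNorm X = Z.trace.re := rfl
  have htr : Y.trace = ∑ i, ((|hX.eigenvalues i| : ℝ) : ℂ) := by
    rw [Matrix.trace_mul_cycle, hUstar, Matrix.one_mul, Matrix.trace_diagonal]
  rw [hZtr, ← hsqrt, htr]
  push_cast
  simp

end

lemma conj_entry {m : Type*} [Fintype m] [DecidableEq m] (U C : Matrix m m ℂ) (i : m) :
    ((star U) * C * U) i i =
      dotProduct (star (fun k => U k i)) (C *ᵥ (fun k => U k i)) := by
  simp only [Matrix.mul_apply, dotProduct, Matrix.mulVec, dotProduct,
    Pi.star_apply, Matrix.star_eq_conjTranspose, Matrix.conjTranspose_apply,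
    Finset.sum_mul, Finset.mul_sum]
  rw [Finset.sum_comm]
  exact Finset.sum_congr rfl fun k _ => Finset.sum_congr rfl fun l _ => by ring

lemma abs_trace_mul_le {m : Type*} [Fintype m] [DecidableEq m] {X : Matrix m m ℂ}
    (C : Matrix m m ℂ) (hX : X.IsHermitian) :
    ‖(X * C).trace‖ ≤ opNorm C * trNorm X := by
  set U : Matrix m m ℂ := (hX.eigenvectorUnitary : Matrix m m ℂ) with hU
  have hUstar : (star U) * U = 1 := Matrix.mem_unitaryGroup_iff'.mp hX.eigenvectorUnitary.2
  set M : Matrix m m ℂ := (star U) * C * U with hM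
  have key : ∀ i, ‖M i i‖ ≤ opNorm C := by
    intro i
    have hv : (fun k => U k i) = (hX.eigenvectorBasis i).ofLp := by
      funext k
      simp [hU]
    have hii : M i i = inner ℂ (hX.eigenvectorBasis i)
        ((Matrix.toEuclideanCLM (𝕜 := ℂ) C) (hX.eigenvectorBasis i)) := by
      rw [EuclideanSpace.inner_eq_star_dotProduct, Matrix.ofLp_toEuclideanCLM,
        ← hv, hM, conj_entry, dotProduct_comm]
    rw [hii]
    calc ‖(inner ℂ (hX.eigenvectorBasis i)
        ((Matrix.toEuclideanCLM (𝕜 := ℂ) C) (hX.eigenvectorBasis i)) : ℂ)‖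
        ≤ ‖hX.eigenvectorBasis i‖ * ‖(Matrix.toEuclideanCLM (𝕜 := ℂ) C)
            (hX.eigenvectorBasis i)‖ := norm_inner_le_norm _ _
      _ ≤ ‖hX.eigenvectorBasis i‖ * (opNorm C * ‖hX.eigenvectorBasis i‖) := by
          gcongr; exact (Matrix.toEuclideanCLM (𝕜 := ℂ) C).le_opNorm _
      _ = opNorm C := by
          rw [hX.eigenvectorBasis.orthonormal.1 i]; ring
  have htr : (X * C).trace = ∑ i, M i i * (hX.eigenvalues i : ℂ) := by
    have h1 : X * C = U * Matrix.diagonal (RCLike.ofReal ∘ hX.eigenvalues) * (star U * C) := by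
      conv_lhs => rw [hX.spectral_theorem]
      simp only [Unitary.conjStarAlgAut_apply, ← hU]
      simp only [Matrix.mul_assoc]
    rw [h1, Matrix.trace_mul_comm, hM]
    have h2 : star U * C * (U * Matrix.diagonal (RCLike.ofReal ∘ hX.eigenvalues)) =
        M * Matrix.diagonal (RCLike.ofReal ∘ hX.eigenvalues) := by
      simp only [hM, Matrix.mul_assoc]
    rw [h2]
    simp [Matrix.trace, Matrix.diag, Matrix.mul_diagonal]
    rfl
  rw [htr, trNorm_hermitian hX]
  calc ‖∑ i, M i i * (hX.eigenvalues i : ℂ)‖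
      ≤ ∑ i, ‖M i i * (hX.eigenvalues i : ℂ)‖ := norm_sum_le _ _
    _ ≤ ∑ i, opNorm C * |hX.eigenvalues i| := by
        refine Finset.sum_le_sum fun i _ => ?_
        rw [norm_mul, Complex.norm_real, Real.norm_eq_abs]
        exact mul_le_mul_of_nonneg_right (key i) (abs_nonneg _)
    _ = opNorm C * ∑ i, |hX.eigenvalues i| := by rw [Finset.mul_sum]

/-- The difference between the two orderings of operational correlations is bounded by
`‖A∘_α B‖ (‖Λ_A(ρ) − ρ‖₁ + ‖Λ_B(ρ) − ρ‖₁)` for any real `α`. -/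
theorem two_orderings_diff_le_sum_invasiveness
    {m ι κ : Type*} [Fintype m] [DecidableEq m] [Fintype ι] [Fintype κ]
    (A B ρ : Matrix m m ℂ) (α : ℝ)
    (a : ι → ℝ) (P : ι → Matrix m m ℂ)
    (b : κ → ℝ) (Q : κ → Matrix m m ℂ)
    (hP_herm : ∀ i, (P i).IsHermitian) (hP_idem : ∀ i, P i * P i = P i)
    (hP_orth : ∀ i j, i ≠ j → P i * P j = 0) (hP_sum : ∑ i, P i = 1)
    (hA : A = ∑ i, (a i : ℂ) • P i)
    (hQ_herm : ∀ j, (Q j).IsHermitian) (hQ_idem : ∀ j, Q j * Q j = Q j)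
    (hQ_orth : ∀ j k, j ≠ k → Q j * Q k = 0) (hQ_sum : ∑ j, Q j = 1)
    (hB : B = ∑ j, (b j : ℂ) • Q j)
    (hρ : ρ.PosSemidef) (hρtr : ρ.trace = 1) :
    ‖(∑ i, ∑ j, ((a i : ℂ) * (b j : ℂ)) * (P i * ρ * P i * Q j).trace)
        - (∑ i, ∑ j, ((a i : ℂ) * (b j : ℂ)) * (Q j * ρ * Q j * P i).trace)‖
      ≤ opNorm ((α : ℂ) • (A * B) + ((1 - α : ℝ) : ℂ) • (B * A))
          * (trNorm ((∑ i, P i * ρ * P i) - ρ) + trNorm ((∑ j, Q j * ρ * Q j) - ρ)) := by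
  
  set C : Matrix m m ℂ := (α : ℂ) • (A * B) + ((1 - α : ℝ) : ℂ) • (B * A) with hC
  set ΛA : Matrix m m ℂ := ∑ i, P i * ρ * P i with hΛA
  set ΛB : Matrix m m ℂ := ∑ j, Q j * ρ * Q j with hΛB
  have hPA : ∀ i, P i * A = (a i : ℂ) • P i := by
    intro i
    rw [hA, Finset.mul_sum, Finset.sum_eq_single i]
    · rw [Matrix.mul_smul, hP_idem]
    · intro j _ hj
      rw [Matrix.mul_smul, hP_orth i j (Ne.symm hj), smul_zero]
    · simp
  have hAP : ∀ i, A * P i = (a i : ℂ) • P i := by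
    intro i
    rw [hA, Finset.sum_mul, Finset.sum_eq_single i]
    · rw [Matrix.smul_mul, hP_idem]
    · intro j _ hj
      rw [Matrix.smul_mul, hP_orth j i hj, smul_zero]
    · simp
  have hQB : ∀ j, Q j * B = (b j : ℂ) • Q j := by
    intro j
    rw [hB, Finset.mul_sum, Finset.sum_eq_single j]
    · rw [Matrix.mul_smul, hQ_idem]
    · intro k _ hk
      rw [Matrix.mul_smul, hQ_orth j k (Ne.symm hk), smul_zero]
    · simp
  have hBQ : ∀ j, B * Q j = (b j : ℂ) • Q j := by
    intro j
    rw [hB, Finset.sum_mul, Finset.sum_eq_single j]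
    · rw [Matrix.smul_mul, hQ_idem]
    · intro k _ hk
      rw [Matrix.smul_mul, hQ_orth k j hk, smul_zero]
    · simp
  have key1 : ∀ i, (P i * ρ * P i * C).trace = (a i : ℂ) * (P i * ρ * P i * B).trace := by
    intro i
    have e1 : P i * ρ * P i * (A * B) = (a i : ℂ) • (P i * ρ * P i * B) := by
      rw [show P i * ρ * P i * (A * B) = P i * ρ * (P i * A) * B by
        simp only [Matrix.mul_assoc], hPA i]
      simp only [Matrix.mul_smul, Matrix.smul_mul, Matrix.mul_assoc]
    have e2 : (P i * ρ * P i * (B * A)).trace = ((a i : ℂ) • (P i * ρ * P i * B)).trace := by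
      rw [show P i * ρ * P i * (B * A) = (P i * ρ * P i * B) * A by
        simp only [Matrix.mul_assoc], Matrix.trace_mul_comm,
        show A * (P i * ρ * P i * B) = (A * P i) * (ρ * (P i * B)) by
          simp only [Matrix.mul_assoc], hAP i]
      rw [Matrix.smul_mul, Matrix.trace_smul, Matrix.trace_smul]
      congr 1
      simp only [Matrix.mul_assoc]
    rw [hC, Matrix.mul_add, Matrix.mul_smul, Matrix.mul_smul, Matrix.trace_add,
      Matrix.trace_smul, Matrix.trace_smul, e1, e2, Matrix.trace_smul]
    simp only [smul_eq_mul]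
    push_cast
    ring
  have key2 : ∀ j, (Q j * ρ * Q j * C).trace = (b j : ℂ) * (Q j * ρ * Q j * A).trace := by
    intro j
    have e1 : Q j * ρ * Q j * (B * A) = (b j : ℂ) • (Q j * ρ * Q j * A) := by
      rw [show Q j * ρ * Q j * (B * A) = Q j * ρ * (Q j * B) * A by
        simp only [Matrix.mul_assoc], hQB j]
      simp only [Matrix.mul_smul, Matrix.smul_mul, Matrix.mul_assoc]
    have e2 : (Q j * ρ * Q j * (A * B)).trace = ((b j : ℂ) • (Q j * ρ * Q j * A)).trace := by
      rw [show Q j * ρ * Q j * (A * B) = (Q j * ρ * Q j * A) * B by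
        simp only [Matrix.mul_assoc], Matrix.trace_mul_comm,
        show B * (Q j * ρ * Q j * A) = (B * Q j) * (ρ * (Q j * A)) by
          simp only [Matrix.mul_assoc], hBQ j]
      rw [Matrix.smul_mul, Matrix.trace_smul, Matrix.trace_smul]
      congr 1
      simp only [Matrix.mul_assoc]
    rw [hC, Matrix.mul_add, Matrix.mul_smul, Matrix.mul_smul, Matrix.trace_add,
      Matrix.trace_smul, Matrix.trace_smul, e1, e2, Matrix.trace_smul]
    simp only [smul_eq_mul]
    push_cast
    ring
  have sumA : (∑ i, ∑ j, ((a i : ℂ) * (b j : ℂ)) * (P i * ρ * P i * Q j).trace)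
      = (ΛA * C).trace := by
    rw [hΛA, Finset.sum_mul, Matrix.trace_sum]
    refine Finset.sum_congr rfl fun i _ => ?_
    rw [key1 i, hB, Finset.mul_sum, Matrix.trace_sum, Finset.mul_sum]
    refine Finset.sum_congr rfl fun j _ => ?_
    rw [Matrix.mul_smul, Matrix.trace_smul]
    simp only [smul_eq_mul]
    ring
  have sumB : (∑ i, ∑ j, ((a i : ℂ) * (b j : ℂ)) * (Q j * ρ * Q j * P i).trace)
      = (ΛB * C).trace := by
    rw [Finset.sum_comm, hΛB, Finset.sum_mul, Matrix.trace_sum]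
    refine Finset.sum_congr rfl fun j _ => ?_
    rw [key2 j, hA, Finset.mul_sum, Matrix.trace_sum, Finset.mul_sum]
    refine Finset.sum_congr rfl fun i _ => ?_
    rw [Matrix.mul_smul, Matrix.trace_smul]
    simp only [smul_eq_mul]
    ring
  have hΛAh : (ΛA - ρ).IsHermitian := by
    refine IsHermitian.sub ?_ hρ.1
    rw [hΛA]
    show _ = _
    rw [Matrix.conjTranspose_sum]
    refine Finset.sum_congr rfl fun i _ => ?_
    rw [show P i * ρ * P i = (P i)ᴴ * ρ * P i by rw [(hP_herm i).eq]]
    exact Matrix.isHermitian_conjTranspose_mul_mul (P i) hρ.1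
  have hΛBh : (ΛB - ρ).IsHermitian := by
    refine IsHermitian.sub ?_ hρ.1
    rw [hΛB]
    show _ = _
    rw [Matrix.conjTranspose_sum]
    refine Finset.sum_congr rfl fun j _ => ?_
    rw [show Q j * ρ * Q j = (Q j)ᴴ * ρ * Q j by rw [(hQ_herm j).eq]]
    exact Matrix.isHermitian_conjTranspose_mul_mul (Q j) hρ.1
  have hdiff : (∑ i, ∑ j, ((a i : ℂ) * (b j : ℂ)) * (P i * ρ * P i * Q j).trace)
        - (∑ i, ∑ j, ((a i : ℂ) * (b j : ℂ)) * (Q j * ρ * Q j * P i).trace)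
      = ((ΛA - ρ) * C).trace - ((ΛB - ρ) * C).trace := by
    rw [sumA, sumB, Matrix.sub_mul, Matrix.sub_mul, Matrix.trace_sub, Matrix.trace_sub]
    ring
  rw [hdiff]
  calc ‖((ΛA - ρ) * C).trace - ((ΛB - ρ) * C).trace‖
      ≤ ‖((ΛA - ρ) * C).trace‖ + ‖((ΛB - ρ) * C).trace‖ := by
        exact norm_sub_le _ _
    _ ≤ opNorm C * trNorm (ΛA - ρ) + opNorm C * trNorm (ΛB - ρ) :=
        add_le_add (abs_trace_mul_le C hΛAh) (abs_trace_mul_le C hΛBh)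
    _ = opNorm C * (trNorm (ΛA - ρ) + trNorm (ΛB - ρ)) := by ring
end

section
/- For α ∈ [0,1], |tr[P_A(a) ρ P_A(a) P_B(b)] − tr[ρ (α P_A(a)P_B(b) + (1−α)P_B(b)P_A(a))]| ≤ ‖α P_A(a)P_B(b) + (1−α)P_B(b)P_A(a)‖ · ‖Λ_A(ρ) − ρ‖₁. -/
open Matrix Complex
open scoped ComplexOrder

set_option maxHeartbeats 1000000
set_option synthInstance.maxHeartbeats 200000

lemma quad_bound {m : Type*} [Fintype m] [DecidableEq m] (X : Matrix m m ℂ) (v : m → ℂ)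
    (hv : ∑ p, star (v p) * v p = 1) :
    ‖∑ p, star (v p) * (X *ᵥ v) p‖ ≤ opNorm X := by
  set ev : EuclideanSpace ℂ m := (WithLp.equiv 2 (m → ℂ)).symm v with hev
  have hvr : ∑ p, ‖v p‖ ^ 2 = 1 := by
    have h : (∑ p, star (v p) * v p) = ((∑ p, ‖v p‖ ^ 2 : ℝ) : ℂ) := by
      push_cast
      refine Finset.sum_congr rfl fun p _ => ?_
      rw [RCLike.star_def, RCLike.conj_mul]
      norm_cast
    rw [h] at hv
    exact_mod_cast hv
  have hnorm : ‖ev‖ = 1 := by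
    rw [EuclideanSpace.norm_eq]
    simp only [hev, WithLp.equiv_symm_apply, WithLp.ofLp_toLp]
    rw [hvr, Real.sqrt_one]
  have hinner : (inner ℂ ev (Matrix.toEuclideanCLM (𝕜 := ℂ) X ev) : ℂ)
      = ∑ p, star (v p) * (X *ᵥ v) p := by
    rw [hev, WithLp.equiv_symm_apply, Matrix.toEuclideanCLM_toLp]
    rw [PiLp.inner_apply]
    refine Finset.sum_congr rfl fun p _ => ?_
    simp [RCLike.inner_apply, Matrix.toLin'_apply, RCLike.star_def, mul_comm]
  calc ‖∑ p, star (v p) * (X *ᵥ v) p‖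
      = ‖(inner ℂ ev (Matrix.toEuclideanCLM (𝕜 := ℂ) X ev) : ℂ)‖ := by
        rw [hinner]
    _ ≤ ‖ev‖ * ‖Matrix.toEuclideanCLM (𝕜 := ℂ) X ev‖ := norm_inner_le_norm _ _
    _ ≤ ‖ev‖ * (‖Matrix.toEuclideanCLM (𝕜 := ℂ) X‖ * ‖ev‖) := by
        gcongr
        exact ContinuousLinearMap.le_opNorm _ _
    _ = opNorm X := by rw [hnorm]; simp [opNorm]

lemma trace_abs_le_s9 {m : Type*} [Fintype m] [DecidableEq m] (Δ X : Matrix m m ℂ)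
    (hΔ : Δ.IsHermitian) :
    ‖(Δ * X).trace‖ ≤ opNorm X * trNorm Δ := by
  set U : Matrix m m ℂ := (hΔ.eigenvectorUnitary : Matrix m m ℂ) with hUdef
  set d := hΔ.eigenvalues with hddef
  have hUU : star U * U = 1 := Unitary.coe_star_mul_self hΔ.eigenvectorUnitary
  have hspec : Δ = U * Matrix.diagonal (RCLike.ofReal ∘ d) * star U := hΔ.spectral_theorem
  -- trace formula
  have htr : (Δ * X).trace = ∑ k, (d k : ℂ) * ((star U * X * U) k k) := by
    conv_lhs => rw [hspec]
    rw [show U * Matrix.diagonal (RCLike.ofReal ∘ d) * star U * X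
        = U * (Matrix.diagonal (RCLike.ofReal ∘ d) * (star U * X)) by
      simp only [mul_assoc]]
    rw [Matrix.trace_mul_comm,
      show Matrix.diagonal (RCLike.ofReal ∘ d) * (star U * X) * U
        = Matrix.diagonal (RCLike.ofReal ∘ d) * (star U * X * U) by
      simp only [mul_assoc]]
    simp only [Matrix.trace, Matrix.diag_apply, Matrix.diagonal_mul, Function.comp]
    rfl
  -- each diagonal entry is a normalized quadratic form
  have hentry : ∀ k, ‖(star U * X * U) k k‖ ≤ opNorm X := by
    intro k
    have h1 : (star U * X * U) k k = ∑ p, star (U p k) * (X *ᵥ (fun q => U q k)) p := by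
      simp only [Matrix.mul_apply, Matrix.mulVec, dotProduct, Matrix.star_apply,
        Finset.sum_mul, Finset.mul_sum]
      rw [Finset.sum_comm]
      refine Finset.sum_congr rfl fun p _ => Finset.sum_congr rfl fun q _ => ?_
      ring
    have h2 : ∑ p, star (U p k) * (U p k) = 1 := by
      have := congrFun (congrFun hUU k) k
      simpa [Matrix.mul_apply, Matrix.star_apply, Matrix.one_apply] using this
    rw [h1]
    exact quad_bound X _ h2
  -- trace norm equals sum of absolute eigenvalues
  have habs : trNorm Δ = ∑ k, |d k| := by
    have hH := (Matrix.posSemidef_conjTranspose_mul_self Δ).1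
    have h1 : trNorm Δ = (cfc Real.sqrt (Δᴴ * Δ)).trace.re := by
      rw [hH.cfc_eq]; rfl
    have h2 : Δᴴ * Δ = cfc (fun x : ℝ => x ^ 2) Δ := by
      rw [cfc_pow_id Δ 2 hΔ.isSelfAdjoint, hΔ.eq, pow_two]
    have h3 : cfc Real.sqrt (Δᴴ * Δ) = cfc (fun x : ℝ => |x|) Δ := by
      rw [h2, ← cfc_comp Real.sqrt (fun x : ℝ => x ^ 2) Δ hΔ.isSelfAdjoint]
      congr 1
      funext x
      simp [Real.sqrt_sq_eq_abs]
    have htrS : (cfc (fun x : ℝ => |x|) Δ).trace = ((∑ k, |d k| : ℝ) : ℂ) := by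
      rw [hΔ.cfc_eq, Matrix.IsHermitian.cfc, Unitary.conjStarAlgAut_apply, ← hUdef,
        Matrix.trace_mul_comm, ← mul_assoc, hUU, one_mul, Matrix.trace_diagonal]
      push_cast
      rfl
    rw [h1, h3, htrS, Complex.ofReal_re]
  rw [htr, habs]
  calc ‖∑ k, (d k : ℂ) * (star U * X * U) k k‖
      ≤ ∑ k, ‖(d k : ℂ) * (star U * X * U) k k‖ := by
        simpa using norm_sum_le Finset.univ
          (fun k => (d k : ℂ) * (star U * X * U) k k)
    _ ≤ ∑ k, |d k| * opNorm X := by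
        refine Finset.sum_le_sum fun k _ => ?_
        rw [norm_mul, Complex.norm_real, Real.norm_eq_abs]
        exact mul_le_mul_of_nonneg_left (hentry k) (abs_nonneg _)
    _ = opNorm X * ∑ k, |d k| := by rw [← Finset.sum_mul, mul_comm]

theorem operational_quasiprob_diff_le_product_invasiveness
    {m ι κ : Type*} [Fintype m] [DecidableEq m] [Fintype ι] [Fintype κ]
    (A B ρ : Matrix m m ℂ) (α : ℝ) (hα : α ∈ Set.Icc (0 : ℝ) 1)
    (a : ι → ℝ) (P : ι → Matrix m m ℂ)
    (b : κ → ℝ) (Q : κ → Matrix m m ℂ)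
    (hP_herm : ∀ i, (P i).IsHermitian) (hP_idem : ∀ i, P i * P i = P i)
    (hP_orth : ∀ i i', i ≠ i' → P i * P i' = 0) (hP_sum : ∑ i, P i = 1)
    (hA : A = ∑ i, (a i : ℂ) • P i)
    (hQ_herm : ∀ j, (Q j).IsHermitian) (hQ_idem : ∀ j, Q j * Q j = Q j)
    (hQ_orth : ∀ j j', j ≠ j' → Q j * Q j' = 0) (hQ_sum : ∑ j, Q j = 1)
    (hB : B = ∑ j, (b j : ℂ) • Q j)
    (hρ : ρ.PosSemidef) (hρtr : ρ.trace = 1)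
    (i : ι) (j : κ) :
    ‖(P i * ρ * P i * Q j).trace
        - (ρ * ((α : ℂ) • (P i * Q j) + ((1 - α : ℝ) : ℂ) • (Q j * P i))).trace‖
      ≤ opNorm ((α : ℂ) • (P i * Q j) + ((1 - α : ℝ) : ℂ) • (Q j * P i)) * trNorm ((∑ i', P i' * ρ * P i') - ρ) := by
  set Λ : Matrix m m ℂ := ∑ i', P i' * ρ * P i' with hΛdef
  set X : Matrix m m ℂ := (α : ℂ) • (P i * Q j) + ((1 - α : ℝ) : ℂ) • (Q j * P i) with hXdef
  have hΛP : Λ * P i = P i * ρ * P i := by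
    rw [hΛdef, Finset.sum_mul]
    rw [Finset.sum_eq_single i]
    · rw [mul_assoc, hP_idem i]
    · intro i' _ hne
      rw [mul_assoc, hP_orth i' i hne, mul_zero]
    · intro h; exact absurd (Finset.mem_univ i) h
  have hPΛ : P i * Λ = P i * ρ * P i := by
    rw [hΛdef, Finset.mul_sum]
    rw [Finset.sum_eq_single i]
    · rw [← mul_assoc, ← mul_assoc, hP_idem i]
    · intro i' _ hne
      rw [← mul_assoc, ← mul_assoc, hP_orth i i' (Ne.symm hne), Matrix.zero_mul,
        Matrix.zero_mul]
    · intro h; exact absurd (Finset.mem_univ i) h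
  have t1 : (Λ * (P i * Q j)).trace = (P i * ρ * P i * Q j).trace := by
    rw [← mul_assoc, hΛP]
  have t2 : (Λ * (Q j * P i)).trace = (P i * ρ * P i * Q j).trace := by
    rw [← mul_assoc, Matrix.trace_mul_cycle, hPΛ]
  have key : (P i * ρ * P i * Q j).trace - (ρ * X).trace = ((Λ - ρ) * X).trace := by
    rw [Matrix.sub_mul, Matrix.trace_sub]
    congr 1
    rw [hXdef, Matrix.mul_add, Matrix.trace_add, Matrix.mul_smul, Matrix.mul_smul,
      Matrix.trace_smul, Matrix.trace_smul, t1, t2, smul_eq_mul, smul_eq_mul, ← add_mul]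
    push_cast
    ring
  rw [key]
  refine trace_abs_le_s9 _ _ ?_
  have hΛherm : Λ.IsHermitian := by
    rw [Matrix.IsHermitian, hΛdef, Matrix.conjTranspose_sum]
    refine Finset.sum_congr rfl fun i' _ => ?_
    rw [Matrix.conjTranspose_mul, Matrix.conjTranspose_mul,
      (hP_herm i').eq, hρ.1.eq, mul_assoc]
  exact hΛherm.sub hρ.1
end

section
/- If A is a self-adjoint operator with spectrum {α, −α} for some α > 0 (a dichotomic observable), then for every operator B and every density operator ρ, the operational correlation equals the symmetrized algebraic correlation: ⟨A→B⟩_ρ^op = tr[ρ {A,B}/2], where {A,B} = AB + BA. -/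
open Matrix Complex
open scoped ComplexOrder

/-- For a dichotomic observable `A` with spectrum `{α, −α}` (`α > 0`), the operational
correlation with any self-adjoint `B` equals the symmetrized algebraic correlation
`tr[ρ {A,B}/2]`. -/
theorem dichotomic_operational_eq_symmetrized
    {m κ : Type*} [Fintype m] [DecidableEq m] [Fintype κ]
    (A B ρ : Matrix m m ℂ) (α : ℝ) (hα : 0 < α)
    (Pp Pm : Matrix m m ℂ)
    (hPp_herm : Pp.IsHermitian) (hPm_herm : Pm.IsHermitian)
    (hPp_idem : Pp * Pp = Pp) (hPm_idem : Pm * Pm = Pm)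
    (h_orth : Pp * Pm = 0) (h_sum : Pp + Pm = 1)
    (hPp_ne : Pp ≠ 0) (hPm_ne : Pm ≠ 0)
    (hA : A = (α : ℂ) • Pp + ((-α : ℝ) : ℂ) • Pm)
    (b : κ → ℝ) (Q : κ → Matrix m m ℂ)
    (hQ_herm : ∀ j, (Q j).IsHermitian) (hQ_idem : ∀ j, Q j * Q j = Q j)
    (hQ_orth : ∀ j k, j ≠ k → Q j * Q k = 0) (hQ_sum : ∑ j, Q j = 1)
    (hB : B = ∑ j, (b j : ℂ) • Q j)
    (hρ : ρ.PosSemidef) (hρtr : ρ.trace = 1) :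
    (∑ j, ((α : ℂ) * (b j : ℂ)) * (Pp * ρ * Pp * Q j).trace)
      + (∑ j, (((-α : ℝ) : ℂ) * (b j : ℂ)) * (Pm * ρ * Pm * Q j).trace)
      = (ρ * (A * B + B * A)).trace / 2 := by
  -- basic projector facts
  have hmp : Pm * Pp = 0 := by
    have h1 : Pm = 1 - Pp := by
      have := h_sum
      linear_combination (norm := noncomm_ring) this
    rw [h1, sub_mul, one_mul, hPp_idem, sub_self]
  -- decomposition of ρ into corners
  have hρdec : ρ = Pp*ρ*Pp + Pp*ρ*Pm + Pm*ρ*Pp + Pm*ρ*Pm := by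
    have : ρ = (Pp + Pm) * ρ * (Pp + Pm) := by rw [h_sum, one_mul, mul_one]
    conv_lhs => rw [this]
    simp only [Matrix.add_mul, Matrix.mul_add, Matrix.mul_assoc]
    abel
  -- helper re-association lemmas
  have e1 : ∀ X : Matrix m m ℂ, Pp * (Pp * X) = Pp * X := fun X => by
    rw [← Matrix.mul_assoc, hPp_idem]
  have e2 : ∀ X : Matrix m m ℂ, Pm * (Pm * X) = Pm * X := fun X => by
    rw [← Matrix.mul_assoc, hPm_idem]
  have e3 : ∀ X : Matrix m m ℂ, Pp * (Pm * X) = 0 := fun X => by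
    rw [← Matrix.mul_assoc, h_orth, Matrix.zero_mul]
  have e4 : ∀ X : Matrix m m ℂ, Pm * (Pp * X) = 0 := fun X => by
    rw [← Matrix.mul_assoc, hmp, Matrix.zero_mul]
  -- the key anticommutator identity
  have hcomm : ρ * A + A * ρ
      = ((2*α : ℝ) : ℂ) • (Pp*ρ*Pp) - ((2*α : ℝ) : ℂ) • (Pm*ρ*Pm) := by
    rw [hA, hρdec]
    push_cast
    simp only [Matrix.add_mul, Matrix.mul_add, smul_mul_assoc, mul_smul_comm,
      Matrix.mul_assoc, hPp_idem, hPm_idem, h_orth, hmp, e1, e2, e3, e4,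
      Matrix.mul_zero, Matrix.zero_mul, smul_zero, add_zero, zero_add]
    module
  -- convert the sums to traces against B
  have hsum : ∀ X : Matrix m m ℂ,
      ∑ j, (b j : ℂ) * (X * Q j).trace = (X * B).trace := by
    intro X
    rw [hB, Matrix.mul_sum, Matrix.trace_sum]
    refine Finset.sum_congr rfl fun j _ => ?_
    rw [Matrix.mul_smul, Matrix.trace_smul, smul_eq_mul]
  have hL1 : ∑ j, ((α : ℂ) * (b j : ℂ)) * (Pp * ρ * Pp * Q j).trace
      = (α : ℂ) * (Pp * ρ * Pp * B).trace := by
    rw [← hsum (Pp * ρ * Pp), Finset.mul_sum]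
    exact Finset.sum_congr rfl fun j _ => by ring
  have hL2 : ∑ j, (((-α : ℝ) : ℂ) * (b j : ℂ)) * (Pm * ρ * Pm * Q j).trace
      = (((-α : ℝ)) : ℂ) * (Pm * ρ * Pm * B).trace := by
    rw [← hsum (Pm * ρ * Pm), Finset.mul_sum]
    exact Finset.sum_congr rfl fun j _ => by ring
  rw [hL1, hL2]
  have htr : (ρ * (A * B + B * A)).trace = ((ρ * A + A * ρ) * B).trace := by
    rw [Matrix.mul_add, Matrix.trace_add, Matrix.add_mul, Matrix.trace_add]
    congr 1
    · rw [Matrix.mul_assoc]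
    · rw [Matrix.trace_mul_comm ρ (B * A), Matrix.mul_assoc,
        Matrix.trace_mul_comm B (A * ρ)]
  rw [htr, hcomm, Matrix.sub_mul, Matrix.trace_sub, Matrix.smul_mul,
    Matrix.smul_mul, Matrix.trace_smul, Matrix.trace_smul, smul_eq_mul,
    smul_eq_mul]
  push_cast
  ring
end

section
/- Suppose A is a self-adjoint operator, not a scalar multiple of the identity, such that for every self-adjoint B with spectrum {+1,−1} and every density operator ρ, the operational correlation equals the symmetrized algebraic correlation: ⟨A→B⟩_ρ^op = tr[ρ {A,B}/2]. Then A has exactly two eigenvalues α and −α for some α > 0. -/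
open Matrix Complex
open scoped ComplexOrder

set_option linter.unusedSectionVars false

section Helpers

variable {m : Type*} [Fintype m] [DecidableEq m]

lemma outer_mulVec (x y z : m → ℂ) :
    vecMulVec x (star y) *ᵥ z = (star y ⬝ᵥ z) • x := by
  ext k
  simp only [Matrix.mulVec, Matrix.vecMulVec_apply, dotProduct, Pi.smul_apply,
    smul_eq_mul, Pi.star_apply]
  rw [Finset.sum_mul]
  exact Finset.sum_congr rfl fun j _ => by ring

lemma trace_outer_mul (x y : m → ℂ) (M : Matrix m m ℂ) :
    (vecMulVec x (star y) * M).trace = star y ⬝ᵥ (M *ᵥ x) := by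
  simp only [Matrix.trace, Matrix.diag, Matrix.mul_apply, Matrix.vecMulVec_apply,
    dotProduct, Matrix.mulVec, Pi.star_apply, Finset.mul_sum]
  rw [Finset.sum_comm]
  exact Finset.sum_congr rfl fun k _ => Finset.sum_congr rfl fun i _ => by ring

lemma outer_conjTranspose (x y : m → ℂ) :
    (vecMulVec x (star y))ᴴ = vecMulVec y (star x) := by
  ext i j
  simp only [Matrix.conjTranspose_apply, Matrix.vecMulVec_apply, Pi.star_apply, star_mul',
    star_star]
  ring

lemma outer_mul_outer (x y z w : m → ℂ) :
    vecMulVec x (star y) * vecMulVec z (star w) = (star y ⬝ᵥ z) • vecMulVec x (star w) := by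
  ext i j
  simp only [Matrix.mul_apply, Matrix.vecMulVec_apply, Matrix.smul_apply, dotProduct,
    smul_eq_mul, Pi.star_apply]
  rw [Finset.sum_mul]
  exact Finset.sum_congr rfl fun k _ => by ring

lemma sum_mulVec' {ι : Type*} (s : Finset ι) (M : ι → Matrix m m ℂ) (x : m → ℂ) :
    (∑ k ∈ s, M k) *ᵥ x = ∑ k ∈ s, M k *ᵥ x := by
  ext i
  simp only [Matrix.mulVec, dotProduct, Finset.sum_apply, Matrix.sum_apply,
    Finset.sum_mul]
  rw [Finset.sum_comm]

lemma exists_unit_fixed (Q : Matrix m m ℂ) (hQ : Q ≠ 0) (hidem : Q * Q = Q) :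
    ∃ u : m → ℂ, Q *ᵥ u = u ∧ star u ⬝ᵥ u = 1 := by
  have hex : ∃ w : m → ℂ, Q *ᵥ w ≠ 0 := by
    by_contra h
    push_neg at h
    apply hQ
    ext i j
    have := congrFun (h (Pi.single j 1)) i
    simpa using this
  obtain ⟨w, hw⟩ := hex
  set w0 := Q *ᵥ w with hw0
  have hQw0 : Q *ᵥ w0 = w0 := by rw [hw0, Matrix.mulVec_mulVec, hidem]
  have hpos : (0:ℝ) < ∑ k, Complex.normSq (w0 k) := by
    obtain ⟨k, hk⟩ := Function.ne_iff.mp hw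
    exact Finset.sum_pos' (fun k _ => Complex.normSq_nonneg _)
      ⟨k, Finset.mem_univ k, Complex.normSq_pos.mpr hk⟩
  set r := Real.sqrt (∑ k, Complex.normSq (w0 k)) with hr
  have hrpos : 0 < r := Real.sqrt_pos.mpr hpos
  have hr2 : r * r = ∑ k, Complex.normSq (w0 k) := Real.mul_self_sqrt hpos.le
  refine ⟨((r:ℂ))⁻¹ • w0, ?_, ?_⟩
  · rw [Matrix.mulVec_smul, hQw0]
  · have hsum : star w0 ⬝ᵥ w0 = ((∑ k, Complex.normSq (w0 k) : ℝ) : ℂ) := by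
      push_cast
      exact Finset.sum_congr rfl fun k _ => by
        rw [Pi.star_apply, Complex.star_def, ← Complex.normSq_eq_conj_mul_self]
    rw [star_smul, smul_dotProduct, dotProduct_smul, hsum]
    rw [star_inv₀, Complex.star_def, Complex.conj_ofReal]
    rw [smul_eq_mul, smul_eq_mul, ← hr2]
    push_cast
    field_simp

end Helpers

/-- If `A` is a non-scalar self-adjoint operator such that the operational correlation with
every `±1`-valued observable `B` equals the symmetrized algebraic correlation `tr[ρ{A,B}/2]`
for every state `ρ`, then `A` has exactly two eigenvalues `α` and `−α` for some `α > 0`.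
Here a `±1`-valued observable is a Hermitian `B` with `B² = 1`, `B ≠ ±1`, whose spectral
projections are `(1 ± B)/2`, so that the operational correlation
`Σ_{a,b} ab tr[P_A(a) ρ P_A(a) P_B(b)]` equals `Σ_a a tr[P_A(a) ρ P_A(a) B]`. -/
theorem equality_implies_dichotomic
    {m ι : Type*} [Fintype m] [DecidableEq m] [Fintype ι] [DecidableEq ι]
    (A : Matrix m m ℂ)
    (a : ι → ℝ) (P : ι → Matrix m m ℂ)
    (hP_herm : ∀ i, (P i).IsHermitian) (hP_idem : ∀ i, P i * P i = P i)
    (hP_orth : ∀ i j, i ≠ j → P i * P j = 0) (hP_sum : ∑ i, P i = 1)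
    (hP_ne : ∀ i, P i ≠ 0) (ha_inj : Function.Injective a)
    (hA : A = ∑ i, (a i : ℂ) • P i)
    (hA_nonscalar : ∀ c : ℂ, A ≠ c • (1 : Matrix m m ℂ))
    (hyp : ∀ B : Matrix m m ℂ, B.IsHermitian → B * B = 1 → B ≠ 1 → B ≠ -1 →
      ∀ ρ : Matrix m m ℂ, ρ.PosSemidef → ρ.trace = 1 →
        (∑ i, (a i : ℂ) * (P i * ρ * P i * B).trace) = (ρ * (A * B + B * A)).trace / 2) :
    ∃ α : ℝ, 0 < α ∧ ∃ i j : ι, i ≠ j ∧ a i = α ∧ a j = -α ∧ ∀ k : ι, k = i ∨ k = j := by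
  -- Step 0: there exist two distinct indices
  have hne : ∃ i j : ι, i ≠ j := by
    by_contra h
    push_neg at h
    rcases isEmpty_or_nonempty ι with hι | hι
    · apply hA_nonscalar 0
      rw [hA]
      simp
    · obtain ⟨i0⟩ := hι
      have hsum1 : ∀ (f : ι → Matrix m m ℂ), ∑ k, f k = f i0 := fun f =>
        Finset.sum_eq_single_of_mem i0 (Finset.mem_univ _)
          (fun b _ hb => absurd (h b i0) hb)
      apply hA_nonscalar (a i0)
      rw [hA, hsum1, ← hP_sum, hsum1]
  -- Step 1: key lemma — for any distinct i j, a j = - a i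
  have key : ∀ i j : ι, i ≠ j → a j = - a i := by
    intro i j hij
    obtain ⟨u, hu_fix, huu⟩ := exists_unit_fixed (P i) (hP_ne i) (hP_idem i)
    obtain ⟨v, hv_fix, hvv⟩ := exists_unit_fixed (P j) (hP_ne j) (hP_idem j)
    have horth : ∀ (p q : ι) (x y : m → ℂ), p ≠ q → P p *ᵥ x = x → P q *ᵥ y = y →
        star x ⬝ᵥ y = 0 := by
      intro p q x y hpq hx hy
      calc star x ⬝ᵥ y = star (P p *ᵥ x) ⬝ᵥ (P q *ᵥ y) := by rw [hx, hy]
        _ = (star x ᵥ* (P p)ᴴ) ⬝ᵥ (P q *ᵥ y) := by rw [Matrix.star_mulVec]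
        _ = ((star x ᵥ* (P p)ᴴ) ᵥ* P q) ⬝ᵥ y := by rw [Matrix.dotProduct_mulVec]
        _ = (star x ᵥ* ((P p)ᴴ * P q)) ⬝ᵥ y := by rw [Matrix.vecMul_vecMul]
        _ = 0 := by
            rw [(hP_herm p).eq, hP_orth p q hpq, Matrix.vecMul_zero, zero_dotProduct]
    have huv : star u ⬝ᵥ v = 0 := horth i j u v hij hu_fix hv_fix
    have hvu : star v ⬝ᵥ u = 0 := horth j i v u hij.symm hv_fix hu_fix
    have hPu : ∀ k, k ≠ i → P k *ᵥ u = 0 := by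
      intro k hk
      rw [← hu_fix, Matrix.mulVec_mulVec, hP_orth k i hk, Matrix.zero_mulVec]
    have hPv : ∀ k, k ≠ j → P k *ᵥ v = 0 := by
      intro k hk
      rw [← hv_fix, Matrix.mulVec_mulVec, hP_orth k j hk, Matrix.zero_mulVec]
    set c : ℝ := (Real.sqrt 2)⁻¹ with hcdef
    have hc2 : (c:ℂ) * c = 1/2 := by
      rw [← Complex.ofReal_mul, hcdef, ← mul_inv, Real.mul_self_sqrt (by norm_num)]
      norm_num
    set ψ : m → ℂ := (c:ℂ) • (u + v) with hψ
    set B : Matrix m m ℂ :=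
      vecMulVec u (star v) + vecMulVec v (star u) + 1
        - vecMulVec u (star u) - vecMulVec v (star v) with hB
    have hBu : B *ᵥ u = v := by
      simp only [hB, Matrix.add_mulVec, Matrix.sub_mulVec, outer_mulVec, Matrix.one_mulVec,
        huu, hvu, one_smul, zero_smul]
      abel
    have hBv : B *ᵥ v = u := by
      simp only [hB, Matrix.add_mulVec, Matrix.sub_mulVec, outer_mulVec, Matrix.one_mulVec,
        hvv, huv, one_smul, zero_smul]
      abel
    have hB_herm : B.IsHermitian := by
      show Bᴴ = B
      simp only [hB, Matrix.conjTranspose_add, Matrix.conjTranspose_sub,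
        Matrix.conjTranspose_one, outer_conjTranspose]
      abel
    have hBB : B * B = 1 := by
      simp only [hB, add_mul, mul_add, sub_mul, mul_sub, one_mul, mul_one,
        outer_mul_outer, huu, hvv, huv, hvu, one_smul, zero_smul]
      abel
    have hB_ne1 : B ≠ 1 := by
      intro h
      have hveq : v = u := by rw [← hBu, h, Matrix.one_mulVec]
      rw [hveq, huu] at hvu
      exact one_ne_zero hvu
    have hB_nem1 : B ≠ -1 := by
      intro h
      have hveq : v = -u := by rw [← hBu, h, Matrix.neg_mulVec, Matrix.one_mulVec]
      rw [hveq] at hvu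
      simp only [star_neg, neg_dotProduct, huu, neg_eq_zero] at hvu
      exact one_ne_zero hvu
    set ρ : Matrix m m ℂ := vecMulVec ψ (star ψ) with hρ
    have hψψ : star ψ ⬝ᵥ ψ = 1 := by
      rw [hψ]
      simp only [star_smul, star_add, smul_dotProduct, dotProduct_smul,
        add_dotProduct, dotProduct_add, huu, hvv, huv, hvu, smul_eq_mul,
        Complex.star_def, Complex.conj_ofReal]
      linear_combination (2:ℂ) * hc2
    have hρ_psd : ρ.PosSemidef := by
      rw [Matrix.posSemidef_iff_dotProduct_mulVec]
      constructor
      · show ρᴴ = ρ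
        rw [hρ, outer_conjTranspose]
      · intro x
        rw [hρ, outer_mulVec, dotProduct_smul]
        have hsw : star x ⬝ᵥ ψ = star (star ψ ⬝ᵥ x) := by
          rw [Matrix.star_dotProduct]
        rw [smul_eq_mul, hsw]
        exact mul_star_self_nonneg _
    have hρ_tr : ρ.trace = 1 := by
      rw [hρ, ← mul_one (vecMulVec ψ (star ψ)), trace_outer_mul, Matrix.one_mulVec, hψψ]
    have heq := hyp B hB_herm hBB hB_ne1 hB_nem1 ρ hρ_psd hρ_tr
    -- LHS is zero
    have hLHS : (∑ k, (a k : ℂ) * (P k * ρ * P k * B).trace) = 0 := by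
      apply Finset.sum_eq_zero
      intro k _
      have htr : (P k * ρ * P k * B).trace = star ψ ⬝ᵥ (P k *ᵥ (B *ᵥ (P k *ᵥ ψ))) := by
        have h1 : P k * ρ * P k * B = P k * (ρ * (P k * B)) := by
          rw [mul_assoc, mul_assoc]
        rw [h1, Matrix.trace_mul_comm, mul_assoc, hρ, trace_outer_mul]
        congr 1
        simp only [Matrix.mulVec_mulVec, mul_assoc]
      rcases eq_or_ne k i with rfl | hki
      · have h2 : P k *ᵥ ψ = (c:ℂ) • u := by
          rw [hψ, Matrix.mulVec_smul, Matrix.mulVec_add, hu_fix, hPv k hij, add_zero]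
        rw [htr, h2, Matrix.mulVec_smul, hBu, Matrix.mulVec_smul, hPv k hij]
        simp
      rcases eq_or_ne k j with rfl | hkj
      · have h2 : P k *ᵥ ψ = (c:ℂ) • v := by
          rw [hψ, Matrix.mulVec_smul, Matrix.mulVec_add, hv_fix, hPu k hki, zero_add]
        rw [htr, h2, Matrix.mulVec_smul, hBv, Matrix.mulVec_smul, hPu k hki]
        simp
      · have h2 : P k *ᵥ ψ = 0 := by
          rw [hψ, Matrix.mulVec_smul, Matrix.mulVec_add, hPu k hki, hPv k hkj]
          simp
        rw [htr, h2, Matrix.mulVec_zero, Matrix.mulVec_zero]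
        simp
    -- A acting on u and v
    have hAu : A *ᵥ u = (a i : ℂ) • u := by
      rw [hA, sum_mulVec']
      rw [Finset.sum_eq_single i
        (fun b _ hb => by rw [Matrix.smul_mulVec, hPu b hb, smul_zero])
        (fun h => absurd (Finset.mem_univ i) h)]
      rw [Matrix.smul_mulVec, hu_fix]
    have hAv : A *ᵥ v = (a j : ℂ) • v := by
      rw [hA, sum_mulVec']
      rw [Finset.sum_eq_single j
        (fun b _ hb => by rw [Matrix.smul_mulVec, hPv b hb, smul_zero])
        (fun h => absurd (Finset.mem_univ j) h)]
      rw [Matrix.smul_mulVec, hv_fix]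
    -- RHS
    have hRHS : (ρ * (A * B + B * A)).trace = (a i : ℂ) + a j := by
      rw [hρ, trace_outer_mul, Matrix.add_mulVec, ← Matrix.mulVec_mulVec,
        ← Matrix.mulVec_mulVec]
      have hBψ : B *ᵥ ψ = ψ := by
        rw [hψ, Matrix.mulVec_smul, Matrix.mulVec_add, hBu, hBv, add_comm]
      have hAψ : A *ᵥ ψ = (c:ℂ) • ((a i:ℂ) • u + (a j:ℂ) • v) := by
        rw [hψ, Matrix.mulVec_smul, Matrix.mulVec_add, hAu, hAv]
      rw [hBψ, hAψ, Matrix.mulVec_smul, Matrix.mulVec_add, Matrix.mulVec_smul,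
        Matrix.mulVec_smul, hBu, hBv]
      rw [hψ]
      simp only [star_smul, star_add, smul_dotProduct, dotProduct_smul,
        add_dotProduct, dotProduct_add, huu, hvv, huv, hvu, smul_eq_mul,
        Complex.star_def, Complex.conj_ofReal]
      linear_combination ((2:ℂ) * (a i : ℂ) + 2 * (a j : ℂ)) * hc2
    rw [hLHS, hRHS] at heq
    have h0 : (a i : ℂ) + a j = 0 := by
      field_simp at heq
      linear_combination -heq
    have hcast : (a j : ℂ) = -(a i : ℂ) := by linear_combination h0
    exact_mod_cast hcast
  -- Step 2: assemble
  obtain ⟨i, j, hij⟩ := hne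
  have haj : a j = - a i := key i j hij
  have hai0 : a i ≠ 0 := by
    intro h
    apply hij
    apply ha_inj
    rw [haj, h, neg_zero]
  have hall : ∀ k, k = i ∨ k = j := by
    intro k
    by_contra hk
    push_neg at hk
    obtain ⟨hki, hkj⟩ := hk
    have h1 : a k = - a i := key i k (Ne.symm hki)
    exact hkj (ha_inj (h1.trans haj.symm))
  rcases hai0.lt_or_gt with hneg | hpos
  · refine ⟨a j, by rw [haj]; linarith, j, i, hij.symm, rfl, by rw [haj]; ring, fun k => (hall k).symm⟩
  · exact ⟨a i, hpos, i, j, hij, rfl, haj, hall⟩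
end

section
/- For any measurable bounded function f of the eigenvalues of A (equivalently, any operator of the form f(A)), the disturbance of f(A) by the Lüders measurement of B bounds from below the total-variation distance between the two orderings of operational joint probabilities: Σ_{a,b} |tr[P_A(a) ρ P_A(a) P_B(b)] − tr[P_B(b) ρ P_B(b) P_A(a)]| ≥ |tr[(Λ_B(ρ) − ρ) f(A)]| / ‖f(A)‖ for all f with f(A) ≠ 0. -/
open Matrix Complex
open scoped ComplexOrder

lemma abs_coef_le_opNorm {m ι : Type*} [Fintype m] [DecidableEq m] [Fintype ι]
    (P : ι → Matrix m m ℂ) (f : ι → ℂ)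
    (hP_idem : ∀ i, P i * P i = P i)
    (hP_orth : ∀ i j, i ≠ j → P i * P j = 0)
    (i : ι) (hPi : P i ≠ 0) :
    ‖f i‖ ≤ opNorm (∑ k, f k • P k) := by
  have hFP : (∑ k, f k • P k) * P i = f i • P i := by
    rw [Finset.sum_mul]
    rw [Finset.sum_eq_single i]
    · rw [smul_mul_assoc, hP_idem i]
    · intro k _ hk
      rw [smul_mul_assoc, hP_orth k i hk, smul_zero]
    · intro h; exact absurd (Finset.mem_univ i) h
  set e := Matrix.toEuclideanCLM (𝕜 := ℂ) (n := m)
  have hcomp : e (∑ k, f k • P k) * e (P i) = f i • e (P i) := by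
    rw [← _root_.map_mul, hFP, _root_.map_smul]
  have hePi : e (P i) ≠ 0 := by
    intro h
    exact hPi (by simpa using e.injective (h.trans (map_zero e).symm))
  obtain ⟨x, hx⟩ : ∃ x, e (P i) x ≠ 0 := by
    by_contra h
    push_neg at h
    exact hePi (ContinuousLinearMap.ext fun x => h x)
  have h1 : ‖(e (∑ k, f k • P k)) (e (P i) x)‖ = ‖f i‖ * ‖e (P i) x‖ := by
    have := congrArg (fun T => T x) hcomp
    simp only [ContinuousLinearMap.mul_apply, ContinuousLinearMap.smul_apply] at this
    rw [this, norm_smul]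
  have h2 : ‖(e (∑ k, f k • P k)) (e (P i) x)‖ ≤ ‖e (∑ k, f k • P k)‖ * ‖e (P i) x‖ :=
    (e (∑ k, f k • P k)).le_opNorm _
  rw [h1] at h2
  have hxpos : 0 < ‖e (P i) x‖ := norm_pos_iff.mpr hx
  exact le_of_mul_le_mul_right h2 hxpos

/-- The total-variation distance between the two orderings of operational joint probabilities
is bounded below by the normalized disturbance of any function `f(A)` of `A` caused by the
Lüders measurement of `B`. -/
theorem TV_ge_disturbance
    {m ι κ : Type*} [Fintype m] [DecidableEq m] [Fintype ι] [Fintype κ]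
    (A B ρ : Matrix m m ℂ)
    (a : ι → ℝ) (P : ι → Matrix m m ℂ)
    (b : κ → ℝ) (Q : κ → Matrix m m ℂ)
    (hP_herm : ∀ i, (P i).IsHermitian) (hP_idem : ∀ i, P i * P i = P i)
    (hP_orth : ∀ i j, i ≠ j → P i * P j = 0) (hP_sum : ∑ i, P i = 1)
    (hA : A = ∑ i, (a i : ℂ) • P i)
    (hQ_herm : ∀ j, (Q j).IsHermitian) (hQ_idem : ∀ j, Q j * Q j = Q j)
    (hQ_orth : ∀ j k, j ≠ k → Q j * Q k = 0) (hQ_sum : ∑ j, Q j = 1)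
    (hB : B = ∑ j, (b j : ℂ) • Q j)
    (hρ : ρ.PosSemidef) (hρtr : ρ.trace = 1)
    (f : ι → ℂ) (hf : (∑ i, f i • P i) ≠ 0) :
    (∑ i, ∑ j, ‖(P i * ρ * P i * Q j).trace - (Q j * ρ * Q j * P i).trace‖)
      ≥ ‖(((∑ j, Q j * ρ * Q j) - ρ) * (∑ i, f i • P i)).trace‖
          / opNorm (∑ i, f i • P i) := by
  set N := opNorm (∑ i, f i • P i) with hNdef
  have hN : 0 < N := by
    have h0 : Matrix.toEuclideanCLM (𝕜 := ℂ) (n := m) (∑ i, f i • P i) ≠ 0 := by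
      intro h
      apply hf
      have := congrArg (Matrix.toEuclideanCLM (𝕜 := ℂ) (n := m)).symm h
      simpa using this
    rw [hNdef, opNorm, norm_pos_iff]
    exact h0
  rw [ge_iff_le, div_le_iff₀ hN]
  -- the trace identity
  have key : (((∑ j, Q j * ρ * Q j) - ρ) * (∑ i, f i • P i)).trace
      = ∑ i, ∑ j, f i * ((Q j * ρ * Q j * P i).trace - (P i * ρ * P i * Q j).trace) := by
    rw [Matrix.mul_sum, Matrix.trace_sum]
    refine Finset.sum_congr rfl fun i _ => ?_
    have hρPi : (ρ * P i).trace = ∑ j, (P i * ρ * P i * Q j).trace := by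
      rw [← Matrix.trace_sum]
      have : ∑ j, (P i * ρ * P i * Q j) = P i * ρ * P i := by
        rw [← Matrix.mul_sum, hQ_sum, mul_one]
      rw [this, Matrix.trace_mul_cycle, hP_idem i, Matrix.trace_mul_comm]
    have hQρ : ((∑ j, Q j * ρ * Q j) * P i).trace = ∑ j, (Q j * ρ * Q j * P i).trace := by
      rw [Finset.sum_mul, Matrix.trace_sum]
    calc ((((∑ j, Q j * ρ * Q j) - ρ)) * (f i • P i)).trace
        = f i * (((∑ j, Q j * ρ * Q j) - ρ) * P i).trace := by
          rw [Matrix.mul_smul, Matrix.trace_smul]; rfl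
      _ = f i * (((∑ j, Q j * ρ * Q j) * P i).trace - (ρ * P i).trace) := by
          rw [Matrix.sub_mul, Matrix.trace_sub]
      _ = f i * ∑ j, ((Q j * ρ * Q j * P i).trace - (P i * ρ * P i * Q j).trace) := by
          rw [hQρ, hρPi, ← Finset.sum_sub_distrib]
      _ = ∑ j, f i * ((Q j * ρ * Q j * P i).trace - (P i * ρ * P i * Q j).trace) := by
          rw [Finset.mul_sum]
  rw [key]
  calc ‖∑ i, ∑ j, f i * ((Q j * ρ * Q j * P i).trace - (P i * ρ * P i * Q j).trace)‖
      ≤ ∑ i, ∑ j, ‖f i * ((Q j * ρ * Q j * P i).trace - (P i * ρ * P i * Q j).trace)‖ := by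
        refine (norm_sum_le _ _).trans (Finset.sum_le_sum fun i _ => norm_sum_le _ _)
    _ ≤ ∑ i, ∑ j, ‖(P i * ρ * P i * Q j).trace - (Q j * ρ * Q j * P i).trace‖ * N := by
        refine Finset.sum_le_sum fun i _ => Finset.sum_le_sum fun j _ => ?_
        rw [norm_mul]
        by_cases hPi : P i = 0
        · simp [hPi]
        · rw [norm_sub_rev ((P i * ρ * P i * Q j).trace)]
          exact mul_le_mul_of_nonneg_right
            (abs_coef_le_opNorm P f hP_idem hP_orth i hPi)
            (norm_nonneg _) |>.trans_eq (mul_comm _ _)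
    _ = (∑ i, ∑ j, ‖(P i * ρ * P i * Q j).trace - (Q j * ρ * Q j * P i).trace‖) * N := by
        rw [Finset.sum_mul]
        exact Finset.sum_congr rfl fun i _ => (Finset.sum_mul _ _ _).symm
end

section
/- In the qubit system, the total-variation distance between the two orderings of sequential measurement probabilities for A = σ_z and B = σ_θ = cos θ σ_z + sin θ σ_x equals max{|sin θ · ⟨σ_x⟩_ρ|, |sin θ · (−sin θ ⟨σ_z⟩_ρ + cos θ ⟨σ_x⟩_ρ)|}, where the total variation distance is Σ_{s,t∈{±1}} |tr[P_{z,s}ρP_{z,s}P_{θ,t}] − tr[P_{θ,t}ρP_{θ,t}P_{z,s}]|. -/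
set_option maxHeartbeats 1600000

open Matrix Complex
open scoped ComplexOrder

noncomputable def σx : Matrix (Fin 2) (Fin 2) ℂ := !![0, 1; 1, 0]
noncomputable def σz : Matrix (Fin 2) (Fin 2) ℂ := !![1, 0; 0, -1]

noncomputable def σθ (θ : ℝ) : Matrix (Fin 2) (Fin 2) ℂ :=
  (Real.cos θ : ℂ) • σz + (Real.sin θ : ℂ) • σx

noncomputable def Pz (s : ℝ) : Matrix (Fin 2) (Fin 2) ℂ := (2 : ℂ)⁻¹ • (1 + (s : ℂ) • σz)

noncomputable def Pθ (θ t : ℝ) : Matrix (Fin 2) (Fin 2) ℂ := (2 : ℂ)⁻¹ • (1 + (t : ℂ) • σθ θ)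

/-- Difference of the two orderings of sequential measurement probabilities. -/
noncomputable def d (θ : ℝ) (ρ : Matrix (Fin 2) (Fin 2) ℂ) (s t : ℝ) : ℝ :=
  ‖(Pz s * ρ * Pz s * Pθ θ t).trace - (Pθ θ t * ρ * Pθ θ t * Pz s).trace‖

lemma key (θ : ℝ) (ρ : Matrix (Fin 2) (Fin 2) ℂ) (s t : ℝ)
    (hs : (s:ℂ)^2 = 1) (ht : (t:ℂ)^2 = 1) :
    (Pz s * ρ * Pz s * Pθ θ t).trace - (Pθ θ t * ρ * Pθ θ t * Pz s).trace
      = (4:ℂ)⁻¹ * ((s:ℂ) * (Real.sin θ:ℂ)^2 * (ρ 0 0 - ρ 1 1)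
          - ((t:ℂ) + (s:ℂ)*(Real.cos θ:ℂ)) * (Real.sin θ:ℂ) * (ρ 0 1 + ρ 1 0)) := by
  have hp : ((Real.sin θ:ℂ))^2 + ((Real.cos θ:ℂ))^2 = 1 := by
    rw [Complex.ofReal_sin, Complex.ofReal_cos]
    exact Complex.sin_sq_add_cos_sq _
  set a := ρ 0 0; set b := ρ 0 1; set g := ρ 1 0; set e := ρ 1 1
  set c := (Real.cos θ : ℂ); set si := (Real.sin θ : ℂ)
  have hPz : Pz s = !![(1+(s:ℂ))/2, 0; 0, (1-(s:ℂ))/2] := by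
    ext i j; fin_cases i <;> fin_cases j <;>
      simp [Pz, σz, Matrix.one_apply] <;> ring
  have hPθ : Pθ θ t = !![(1+(t:ℂ)*c)/2, (t:ℂ)*si/2; (t:ℂ)*si/2, (1-(t:ℂ)*c)/2] := by
    ext i j; fin_cases i <;> fin_cases j <;>
      simp [Pθ, σθ, σz, σx, Matrix.one_apply, c, si] <;> ring
  have hrho : ρ = !![a, b; g, e] := by
    ext i j; fin_cases i <;> fin_cases j <;> rfl
  rw [hPz, hPθ, hrho]
  simp only [Matrix.mul_fin_two, Matrix.trace_fin_two_of, Matrix.cons_val_zero,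
    Matrix.cons_val_one, Matrix.head_cons]
  linear_combination
    ((e + a - (t:ℂ)*si*g - (t:ℂ)*si*b - (t:ℂ)*c*e + (t:ℂ)*c*a)/8) * hs
    + ((-si^2*e - si^2*a - c^2*e - c^2*a - (s:ℂ)*si^2*e + (s:ℂ)*si^2*a
        - 2*(s:ℂ)*c*si*g - 2*(s:ℂ)*c*si*b + (s:ℂ)*c^2*e - (s:ℂ)*c^2*a)/8) * ht
    + ((-e - a + (s:ℂ)*e - (s:ℂ)*a)/8) * hp

lemma habs (u v : ℝ) : |u+v| + |u-v| = 2 * max |u| |v| := by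
  rcases abs_cases (u+v) with ⟨h1, _⟩ | ⟨h1, _⟩ <;>
  rcases abs_cases (u-v) with ⟨h2, _⟩ | ⟨h2, _⟩ <;>
  rcases abs_cases u with ⟨h3, _⟩ | ⟨h3, _⟩ <;>
  rcases abs_cases v with ⟨h4, _⟩ | ⟨h4, _⟩ <;>
  rcases max_cases |u| |v| with ⟨h5, h6⟩ | ⟨h5, h6⟩ <;>
  linarith

/-- The total-variation distance between the two orderings of sequential measurement
probabilities for `σ_z` and `σ_θ` on a qubit. -/
theorem qubit_TV_distance (θ : ℝ) (ρ : Matrix (Fin 2) (Fin 2) ℂ)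
    (hρ : ρ.PosSemidef) (hρtr : ρ.trace = 1) :
    d θ ρ 1 1 + d θ ρ 1 (-1) + d θ ρ (-1) 1 + d θ ρ (-1) (-1)
      = max |Real.sin θ * ((ρ * σx).trace).re|
          |Real.sin θ * (-(Real.sin θ) * ((ρ * σz).trace).re
              + Real.cos θ * ((ρ * σx).trace).re)| := by
  have hherm := hρ.1
  set X : ℝ := 2 * (ρ 0 1).re with hXdef
  set Z : ℝ := (ρ 0 0).re - (ρ 1 1).re with hZdef
  have h10 : ρ 1 0 = (starRingEnd ℂ) (ρ 0 1) := (hherm.apply 1 0).symm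
  have h00 : (ρ 0 0).im = 0 := by
    have := congrArg Complex.im (hherm.apply 0 0)
    simp [Complex.conj_im] at this
    linarith
  have h11 : (ρ 1 1).im = 0 := by
    have := congrArg Complex.im (hherm.apply 1 1)
    simp [Complex.conj_im] at this
    linarith
  have hsum : ρ 0 1 + ρ 1 0 = ((X : ℝ) : ℂ) := by
    rw [h10, Complex.add_conj, hXdef]
  have hdiff : ρ 0 0 - ρ 1 1 = ((Z : ℝ) : ℂ) := by
    have e0 : ρ 0 0 = ((ρ 0 0).re : ℂ) := by
      exact Complex.ext rfl (by simpa using h00)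
    have e1 : ρ 1 1 = ((ρ 1 1).re : ℂ) := by
      exact Complex.ext rfl (by simpa using h11)
    rw [e0, e1, hZdef]; push_cast; ring
  have hX : ((ρ * σx).trace).re = X := by
    have : (ρ * σx).trace = ρ 0 1 + ρ 1 0 := by
      simp [σx, Matrix.trace_fin_two, Matrix.mul_apply, Fin.sum_univ_two]
    rw [this, hsum, Complex.ofReal_re]
  have hZ : ((ρ * σz).trace).re = Z := by
    have : (ρ * σz).trace = ρ 0 0 - ρ 1 1 := by
      simp [σz, Matrix.trace_fin_two, Matrix.mul_apply, Fin.sum_univ_two]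
      ring
    rw [this, hdiff, Complex.ofReal_re]
  have hd : ∀ s t : ℝ, (s:ℂ)^2 = 1 → (t:ℂ)^2 = 1 →
      d θ ρ s t = |(s * Real.sin θ^2 * Z - (t + s * Real.cos θ) * Real.sin θ * X)/4| := by
    intro s t hs ht
    rw [d, key θ ρ s t hs ht, hsum, hdiff]
    rw [show (4:ℂ)⁻¹ * ((s:ℂ) * (Real.sin θ:ℂ)^2 * ((Z:ℝ):ℂ)
          - ((t:ℂ) + (s:ℂ)*(Real.cos θ:ℂ)) * (Real.sin θ:ℂ) * ((X:ℝ):ℂ))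
        = (((s * Real.sin θ^2 * Z - (t + s * Real.cos θ) * Real.sin θ * X)/4 : ℝ) : ℂ) by
      push_cast; ring]
    rw [Complex.norm_real, Real.norm_eq_abs]
  rw [hd 1 1 (by norm_num) (by norm_num), hd 1 (-1) (by norm_num) (by push_cast; norm_num),
    hd (-1) 1 (by push_cast; norm_num) (by norm_num),
    hd (-1) (-1) (by push_cast; norm_num) (by push_cast; norm_num), hX, hZ]
  set u : ℝ := Real.sin θ * X with hu
  set v : ℝ := Real.sin θ * (-(Real.sin θ) * Z + Real.cos θ * X) with hv
  rw [show ((1:ℝ) * Real.sin θ^2 * Z - (1 + 1 * Real.cos θ) * Real.sin θ * X)/4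
      = -(u+v)/4 by rw [hu, hv]; ring]
  rw [show ((1:ℝ) * Real.sin θ^2 * Z - (-1 + 1 * Real.cos θ) * Real.sin θ * X)/4
      = (u-v)/4 by rw [hu, hv]; ring]
  rw [show ((-1:ℝ) * Real.sin θ^2 * Z - (1 + -1 * Real.cos θ) * Real.sin θ * X)/4
      = -(u-v)/4 by rw [hu, hv]; ring]
  rw [show ((-1:ℝ) * Real.sin θ^2 * Z - (-1 + -1 * Real.cos θ) * Real.sin θ * X)/4
      = (u+v)/4 by rw [hu, hv]; ring]
  have h := habs u v
  rw [show -(u+v)/4 = -((u+v)/4) by ring, show -(u-v)/4 = -((u-v)/4) by ring,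
    abs_neg, abs_neg, abs_div, abs_div]
  rw [show |(4:ℝ)| = 4 by norm_num]
  linarith
end

section
/- For the qubit observables A = σ_z and B = σ_θ = cos θ σ_z + sin θ σ_x, the maximum disturbance of B-observables by the Lüders measurement of A satisfies sup_{(β₀,β₁)≠0, β₀,β₁∈ℂ} |tr[(Λ_A(ρ)−ρ)(β₀I + β₁σ_θ)]| / ‖β₀I + β₁σ_θ‖ = |sin θ · ⟨σ_x⟩_ρ|. -/
open Matrix Complex
open scoped ComplexOrder

lemma trace_formula (θ : ℝ) (ρ : Matrix (Fin 2) (Fin 2) ℂ) (β₀ β₁ : ℂ) :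
    (((Pz 1 * ρ * Pz 1 + Pz (-1) * ρ * Pz (-1)) - ρ)
        * (β₀ • (1 : Matrix (Fin 2) (Fin 2) ℂ) + β₁ • σθ θ)).trace
      = -(β₁ * (Real.sin θ : ℂ) * (ρ 0 1 + ρ 1 0)) := by
  simp [Pz, σθ, σx, σz, Matrix.trace, Matrix.mul_apply, Fin.sum_univ_two, Matrix.one_apply]
  ring

lemma trace_rho_sx (ρ : Matrix (Fin 2) (Fin 2) ℂ) : (ρ * σx).trace = ρ 0 1 + ρ 1 0 := by
  simp [σx, Matrix.trace, Matrix.mul_apply, Fin.sum_univ_two]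

lemma sθ_mul_self (θ : ℝ) : σθ θ * σθ θ = 1 := by
  ext i j
  fin_cases i <;> fin_cases j <;>
    simp [σθ, σx, σz, Matrix.mul_apply, Fin.sum_univ_two, Matrix.one_apply,
      ← Complex.ofReal_cos, ← Complex.ofReal_sin] <;>
    · norm_cast
      nlinarith [Real.sin_sq_add_cos_sq θ]

lemma sθ_herm (θ : ℝ) : (σθ θ)ᴴ = σθ θ := by
  ext i j
  fin_cases i <;> fin_cases j <;>
    simp [σθ, σx, σz, ← Complex.ofReal_cos, ← Complex.ofReal_sin, Complex.conj_ofReal]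

lemma opNorm_sθ (θ : ℝ) : opNorm (σθ θ) = 1 := by
  have h1 : star (Matrix.toEuclideanCLM (𝕜 := ℂ) (σθ θ)) * Matrix.toEuclideanCLM (𝕜 := ℂ) (σθ θ)
      = 1 := by
    rw [← map_star, ← _root_.map_mul, ← _root_.map_one (Matrix.toEuclideanCLM (𝕜 := ℂ))]
    congr 1
    rw [Matrix.star_eq_conjTranspose, sθ_herm, sθ_mul_self]
  have h2 := CStarRing.norm_star_mul_self (x := Matrix.toEuclideanCLM (𝕜 := ℂ) (σθ θ))
  rw [h1, norm_one] at h2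
  have := norm_nonneg (Matrix.toEuclideanCLM (𝕜 := ℂ) (σθ θ))
  unfold opNorm
  nlinarith [h2]

set_option linter.unreachableTactic false in
set_option linter.unusedTactic false in
lemma beta_le_opNorm (θ : ℝ) (β₀ β₁ : ℂ) :
    ‖β₁‖ ≤ opNorm (β₀ • (1 : Matrix (Fin 2) (Fin 2) ℂ) + β₁ • σθ θ) := by
  set M := β₀ • (1 : Matrix (Fin 2) (Fin 2) ℂ) + β₁ • σθ θ with hM
  have key : ∀ (u : Fin 2 → ℂ) (μ : ℂ), M.mulVec u = μ • u →
      ‖(WithLp.equiv 2 (Fin 2 → ℂ)).symm u‖ = 1 → ‖μ‖ ≤ opNorm M := by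
    intro u μ hu hn
    have h1 : Matrix.toEuclideanCLM (𝕜 := ℂ) M ((WithLp.equiv 2 _).symm u)
        = μ • (WithLp.equiv 2 _).symm u := by
      change WithLp.toLp 2 (M *ᵥ u) = _
      rw [hu]
      rfl
    have h2 := (Matrix.toEuclideanCLM (𝕜 := ℂ) M).le_opNorm ((WithLp.equiv 2 _).symm u)
    rw [h1, norm_smul, hn] at h2
    simpa [opNorm] using h2
  have hc : Real.cos θ * Real.cos (θ/2) + Real.sin θ * Real.sin (θ/2) = Real.cos (θ/2) := by
    have := Real.cos_sub θ (θ/2)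
    rw [show θ - θ/2 = θ/2 by ring] at this
    linarith
  have hs : Real.sin θ * Real.cos (θ/2) - Real.cos θ * Real.sin (θ/2) = Real.sin (θ/2) := by
    have := Real.sin_sub θ (θ/2)
    rw [show θ - θ/2 = θ/2 by ring] at this
    linarith
  have hcC : ((Real.cos θ : ℂ)) * (Real.cos (θ/2) : ℂ) + (Real.sin θ : ℂ) * (Real.sin (θ/2) : ℂ)
      = (Real.cos (θ/2) : ℂ) := by exact_mod_cast congrArg (Complex.ofReal) hc
  have hsC : ((Real.sin θ : ℂ)) * (Real.cos (θ/2) : ℂ) - (Real.cos θ : ℂ) * (Real.sin (θ/2) : ℂ)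
      = (Real.sin (θ/2) : ℂ) := by exact_mod_cast congrArg (Complex.ofReal) hs
  have hnorm : ∀ a b : ℝ, a^2 + b^2 = 1 →
      ‖(WithLp.equiv 2 (Fin 2 → ℂ)).symm ![(a : ℂ), (b : ℂ)]‖ = 1 := by
    intro a b hab
    rw [EuclideanSpace.norm_eq]
    simp [Fin.sum_univ_two]
    exact hab
  have e1 : M.mulVec ![(Real.cos (θ/2) : ℂ), (Real.sin (θ/2) : ℂ)]
      = (β₀ + β₁) • ![(Real.cos (θ/2) : ℂ), (Real.sin (θ/2) : ℂ)] := by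
    funext i
    fin_cases i <;>
      simp [hM, Matrix.mulVec, dotProduct, Fin.sum_univ_two, σθ, σx, σz,
        Matrix.one_apply, ← Complex.ofReal_cos, ← Complex.ofReal_sin] <;>
      first
        | linear_combination β₁ * hcC | linear_combination (-β₁) * hcC
        | linear_combination β₁ * hsC | linear_combination (-β₁) * hsC
        | linear_combination (-2*β₁) * hcC + (-β₁) * hsC
        | linear_combination (2*β₁) * hcC + β₁ * hsC
  have e2 : M.mulVec ![(-(Real.sin (θ/2)) : ℂ), (Real.cos (θ/2) : ℂ)]
      = (β₀ - β₁) • ![(-(Real.sin (θ/2)) : ℂ), (Real.cos (θ/2) : ℂ)] := by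
    funext i
    fin_cases i <;>
      simp [hM, Matrix.mulVec, dotProduct, Fin.sum_univ_two, σθ, σx, σz,
        Matrix.one_apply, ← Complex.ofReal_cos, ← Complex.ofReal_sin] <;>
      first
        | linear_combination β₁ * hcC | linear_combination (-β₁) * hcC
        | linear_combination β₁ * hsC | linear_combination (-β₁) * hsC
        | linear_combination (-2*β₁) * hcC + (-β₁) * hsC
        | linear_combination (2*β₁) * hcC + β₁ * hsC
  have l1 := key _ _ e1 (hnorm _ _ (by nlinarith [Real.sin_sq_add_cos_sq (θ/2)]))
  have l2 := key _ _ e2 (by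
    have := hnorm (-Real.sin (θ/2)) (Real.cos (θ/2)) (by nlinarith [Real.sin_sq_add_cos_sq (θ/2)])
    simpa using this)
  have htri : 2 * ‖β₁‖ ≤ ‖β₀ + β₁‖ + ‖β₀ - β₁‖ := by
    have h := norm_sub_le_norm_sub_add_norm_sub (β₀ + β₁) 0 (β₀ - β₁)
    rw [show β₀ + β₁ - (β₀ - β₁) = 2 * β₁ by ring] at h
    rw [show (0:ℂ) - (β₀ - β₁) = -(β₀ - β₁) by ring, norm_neg, sub_zero] at h
    calc 2 * ‖β₁‖ = ‖2 * β₁‖ := by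
          rw [norm_mul, Complex.norm_two]
      _ ≤ _ := h
  linarith

/-- The maximum disturbance of `σ_θ`-observables by the Lüders measurement of `σ_z`
equals `|sin θ · ⟨σ_x⟩_ρ|`. -/
theorem qubit_max_disturbance (θ : ℝ) (ρ : Matrix (Fin 2) (Fin 2) ℂ)
    (hρ : ρ.PosSemidef) (hρtr : ρ.trace = 1) :
    sSup {r : ℝ | ∃ β₀ β₁ : ℂ, ¬(β₀ = 0 ∧ β₁ = 0) ∧
        r = ‖((((Pz 1 * ρ * Pz 1 + Pz (-1) * ρ * Pz (-1)) - ρ)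
              * (β₀ • (1 : Matrix (Fin 2) (Fin 2) ℂ) + β₁ • σθ θ)).trace)‖
            / opNorm (β₀ • (1 : Matrix (Fin 2) (Fin 2) ℂ) + β₁ • σθ θ)}
      = |Real.sin θ * ((ρ * σx).trace).re| := by
  set t : ℂ := ρ 0 1 + ρ 1 0 with ht
  set c : ℝ := |Real.sin θ * ((ρ * σx).trace).re| with hcdef
  -- hermiticity
  have h10 : ρ 1 0 = (starRingEnd ℂ) (ρ 0 1) := by
    have h := congrFun (congrFun hρ.1 1) 0
    rw [Matrix.conjTranspose_apply] at h
    exact h.symm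
  have him : t.im = 0 := by
    rw [ht, h10]
    simp [Complex.add_im, Complex.conj_im]
  have habs : ‖t‖ = |t.re| := by
    have h : ((t.re : ℝ) : ℂ) = t := Complex.ext rfl (by simp [him])
    calc ‖t‖ = ‖((t.re : ℝ) : ℂ)‖ := by rw [h]
      _ = |t.re| := by rw [Complex.norm_real, Real.norm_eq_abs]
  have htre : ((ρ * σx).trace).re = t.re := by rw [trace_rho_sx, ht]
  have hc2 : c = |Real.sin θ| * |t.re| := by rw [hcdef, htre, abs_mul]
  -- abs of the trace
  have habs_trace : ∀ β₀ β₁ : ℂ,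
      ‖(((Pz 1 * ρ * Pz 1 + Pz (-1) * ρ * Pz (-1)) - ρ)
          * (β₀ • (1 : Matrix (Fin 2) (Fin 2) ℂ) + β₁ • σθ θ)).trace‖
        = ‖β₁‖ * c := by
    intro β₀ β₁
    rw [trace_formula, ← ht, norm_neg, norm_mul, norm_mul,
      Complex.norm_real, Real.norm_eq_abs, habs, hc2]
    ring
  -- the witness: β₀ = 0, β₁ = 1
  have hmem : c ∈ {r : ℝ | ∃ β₀ β₁ : ℂ, ¬(β₀ = 0 ∧ β₁ = 0) ∧
      r = ‖(((Pz 1 * ρ * Pz 1 + Pz (-1) * ρ * Pz (-1)) - ρ)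
            * (β₀ • (1 : Matrix (Fin 2) (Fin 2) ℂ) + β₁ • σθ θ)).trace‖
          / opNorm (β₀ • (1 : Matrix (Fin 2) (Fin 2) ℂ) + β₁ • σθ θ)} := by
    refine ⟨0, 1, by simp, ?_⟩
    rw [habs_trace 0 1]
    have hop : opNorm ((0:ℂ) • (1 : Matrix (Fin 2) (Fin 2) ℂ) + (1:ℂ) • σθ θ) = 1 := by
      rw [show (0:ℂ) • (1 : Matrix (Fin 2) (Fin 2) ℂ) + (1:ℂ) • σθ θ = σθ θ by
        rw [zero_smul, one_smul, zero_add]]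
      exact opNorm_sθ θ
    rw [hop]
    simp
  -- upper bound
  have hub : ∀ r ∈ {r : ℝ | ∃ β₀ β₁ : ℂ, ¬(β₀ = 0 ∧ β₁ = 0) ∧
      r = ‖(((Pz 1 * ρ * Pz 1 + Pz (-1) * ρ * Pz (-1)) - ρ)
            * (β₀ • (1 : Matrix (Fin 2) (Fin 2) ℂ) + β₁ • σθ θ)).trace‖
          / opNorm (β₀ • (1 : Matrix (Fin 2) (Fin 2) ℂ) + β₁ • σθ θ)}, r ≤ c := by
    rintro r ⟨β₀, β₁, -, rfl⟩
    rw [habs_trace β₀ β₁]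
    set N := opNorm (β₀ • (1 : Matrix (Fin 2) (Fin 2) ℂ) + β₁ • σθ θ) with hN
    have hβN : ‖β₁‖ ≤ N := beta_le_opNorm θ β₀ β₁
    have hc0 : 0 ≤ c := abs_nonneg _
    rcases eq_or_lt_of_le (norm_nonneg (Matrix.toEuclideanCLM (𝕜 := ℂ)
        (β₀ • (1 : Matrix (Fin 2) (Fin 2) ℂ) + β₁ • σθ θ))) with h0 | h0
    · rw [hN, opNorm, ← h0, div_zero]
      exact hc0
    · rw [div_le_iff₀ (by exact h0)]
      have := norm_nonneg β₁
      nlinarith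
  exact le_antisymm (csSup_le ⟨c, hmem⟩ hub) (le_csSup ⟨c, hub⟩ hmem)
end
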